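/- Let σ = σ_1 ⊕_r σ_2 be a direct sum of external type where Q^+ r is an extreme ray of both σ_1 and σ_2. Then Q^+ r is an extreme ray of σ. -/

import Mathlib

open scoped BigOperators

/-- The cone of nonnegative rational combinations of elements of `S`. -/
def posSpan {n : ℕ} (S : Set (Fin n → ℚ)) : Set (Fin n → ℚ) :=
  {x | ∃ (k : ℕ) (c : Fin k → ℚ) (b : Fin k → (Fin n → ℚ)),
    (∀ i, 0 ≤ c i) ∧ (∀ i, b i ∈ S) ∧ x = ∑ i, c i • b i}

/-- A rational polyhedral cone: `posSpan` of a finite set. -/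
def IsPolyCone {n : ℕ} (σ : Set (Fin n → ℚ)) : Prop :=
  ∃ B : Finset (Fin n → ℚ), σ = posSpan (B : Set (Fin n → ℚ))

/-- A cone is strongly convex if `σ ∩ (-σ) = {0}`. -/
def StronglyConvex {n : ℕ} (σ : Set (Fin n → ℚ)) : Prop :=
  ∀ x, x ∈ σ → -x ∈ σ → x = 0

/-- dot product in `ℚ^n`. -/
def dotQ {n : ℕ} (c x : Fin n → ℚ) : ℚ := ∑ i, c i * x i

/-- `R` is an extreme ray of `σ`: a one-dimensional face cut out by a
supporting vector `c`. -/
def IsExtremeRay {n : ℕ} (σ R : Set (Fin n → ℚ)) : Prop :=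
  ∃ c : Fin n → ℚ, (∀ x ∈ σ, 0 ≤ dotQ c x) ∧
    R = {x ∈ σ | dotQ c x = 0} ∧
    Module.finrank ℚ (Submodule.span ℚ R) = 1

/-- The dimension of a cone: dimension of its rational linear span. -/
noncomputable def coneDim {n : ℕ} (σ : Set (Fin n → ℚ)) : ℕ :=
  Module.finrank ℚ (Submodule.span ℚ σ)

/-- `σ` is the direct sum of `σ₁` and `σ₂` along `a`. -/
def IsDirectSumAlong {n : ℕ} (σ₁ σ₂ σ : Set (Fin n → ℚ)) (a : Fin n → ℚ) : Prop :=
  a ∈ σ₁ ∩ σ₂ ∧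
  Submodule.span ℚ σ₁ ⊓ Submodule.span ℚ σ₂ = Submodule.span ℚ {a} ∧
  σ = posSpan (σ₁ ∪ σ₂)

/-- `σ` is a direct sum of `σ₁` and `σ₂`. -/
def IsDirectSum {n : ℕ} (σ₁ σ₂ σ : Set (Fin n → ℚ)) : Prop :=
  ∃ a, IsDirectSumAlong σ₁ σ₂ σ a

/-- `a` lies on an extreme ray of `σ`. -/
def OnExtremeRay {n : ℕ} (σ : Set (Fin n → ℚ)) (a : Fin n → ℚ) : Prop :=
  ∃ R, IsExtremeRay σ R ∧ a ∈ R

/-- The ray `ℚ⁺ r`. -/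
def rayOf {n : ℕ} (r : Fin n → ℚ) : Set (Fin n → ℚ) :=
  {x | ∃ q : ℚ, 0 ≤ q ∧ x = q • r}

-- extension lemma
lemma extend_vanish {K V : Type*} [Field K] [AddCommGroup V] [Module K V]
    (V₁ W : Submodule K V) (f : V →ₗ[K] K) (h : ∀ x ∈ V₁ ⊓ W, f x = 0) :
    ∃ g : V →ₗ[K] K, (∀ x ∈ V₁, g x = f x) ∧ (∀ x ∈ W, g x = 0) := by
  set q := W.mkQ
  set g₀ : V₁ →ₗ[K] V ⧸ W := q.comp V₁.subtype with hg₀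
  set f₀ : V₁ →ₗ[K] K := f.comp V₁.subtype with hf₀
  have hker : LinearMap.ker g₀ ≤ LinearMap.ker f₀ := by
    intro x hx
    have hxW : (x : V) ∈ W := by
      simpa [g₀, q, Submodule.Quotient.mk_eq_zero] using hx
    have : f₀ x = 0 := h x ⟨x.2, hxW⟩
    simpa using this
  set fbar := (LinearMap.ker g₀).liftQ f₀ hker with hfbar
  set e := g₀.quotKerEquivRange with he
  set ψ₀ : LinearMap.range g₀ →ₗ[K] K := fbar.comp (e.symm : LinearMap.range g₀ →ₗ[K] _) with hψ₀
  obtain ⟨ψ, hψ⟩ := ψ₀.exists_extend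
  refine ⟨ψ.comp q, ?_, ?_⟩
  · intro x hx
    have h1 : q x = (LinearMap.range g₀).subtype ⟨g₀ ⟨x, hx⟩, LinearMap.mem_range_self _ _⟩ := rfl
    have h2 : ψ ((LinearMap.range g₀).subtype ⟨g₀ ⟨x, hx⟩, LinearMap.mem_range_self _ _⟩)
        = ψ₀ ⟨g₀ ⟨x, hx⟩, LinearMap.mem_range_self _ _⟩ := by
      rw [← hψ]; rfl
    have h3 : e.symm ⟨g₀ ⟨x, hx⟩, LinearMap.mem_range_self _ _⟩
        = Submodule.Quotient.mk ⟨x, hx⟩ := by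
      rw [LinearEquiv.symm_apply_eq]
      rfl
    simp only [LinearMap.comp_apply, h1, h2, hψ₀, LinearMap.comp_apply,
      LinearEquiv.coe_coe, h3, hfbar]
    simp [f₀]
  · intro x hx
    have : q x = 0 := by simpa [q, Submodule.Quotient.mk_eq_zero] using hx
    simp [this]

def dotLin {n : ℕ} (c : Fin n → ℚ) : (Fin n → ℚ) →ₗ[ℚ] ℚ where
  toFun := dotQ c
  map_add' x y := by simp [dotQ, mul_add, Finset.sum_add_distrib]
  map_smul' q x := by
    simp [dotQ, Finset.mul_sum, mul_comm, mul_left_comm]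

lemma dotQ_eq_lin {n : ℕ} (φ : (Fin n → ℚ) →ₗ[ℚ] ℚ) (x : Fin n → ℚ) :
    dotQ (fun i => φ (Pi.single i 1)) x = φ x := by
  conv_rhs => rw [← Finset.univ_sum_single x]
  rw [map_sum, dotQ]
  refine Finset.sum_congr rfl fun i _ => ?_
  have : Pi.single i (x i) = x i • (Pi.single i 1 : Fin n → ℚ) := by
    ext j
    rcases eq_or_ne i j with rfl | h
    · simp
    · simp [Pi.single_eq_of_ne' h]
  rw [this, map_smul, smul_eq_mul, mul_comm]

lemma posSpan_subset {n : ℕ} (S : Set (Fin n → ℚ)) : S ⊆ posSpan S := by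
  intro x hx
  exact ⟨1, fun _ => 1, fun _ => x, fun _ => by norm_num, fun _ => hx, by simp⟩

lemma posSpan_zero {n : ℕ} (S : Set (Fin n → ℚ)) : (0 : Fin n → ℚ) ∈ posSpan S :=
  ⟨0, ![], ![], fun i => i.elim0, fun i => i.elim0, by simp⟩

lemma posSpan_add {n : ℕ} (S : Set (Fin n → ℚ)) {x y : Fin n → ℚ}
    (hx : x ∈ posSpan S) (hy : y ∈ posSpan S) : x + y ∈ posSpan S := by
  obtain ⟨k, c, b, hc, hb, rfl⟩ := hx
  obtain ⟨l, d, e, hd, he, rfl⟩ := hy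
  refine ⟨k + l, Fin.append c d, Fin.append b e, ?_, ?_, ?_⟩
  · intro i
    refine Fin.addCases (fun j => ?_) (fun j => ?_) i
    · simpa [Fin.append_left] using hc j
    · simpa [Fin.append_right] using hd j
  · intro i
    refine Fin.addCases (fun j => ?_) (fun j => ?_) i
    · simpa [Fin.append_left] using hb j
    · simpa [Fin.append_right] using he j
  · rw [Fin.sum_univ_add]
    simp [Fin.append_left, Fin.append_right]

lemma posSpan_smul {n : ℕ} (S : Set (Fin n → ℚ)) {x : Fin n → ℚ} {q : ℚ}
    (hq : 0 ≤ q) (hx : x ∈ posSpan S) : q • x ∈ posSpan S := by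
  obtain ⟨k, c, b, hc, hb, rfl⟩ := hx
  exact ⟨k, fun i => q * c i, b, fun i => mul_nonneg hq (hc i),
    hb, by rw [Finset.smul_sum]; simp [mul_smul]⟩

/-- In an external-type direct sum along `r` where `ℚ⁺r` is an extreme ray of
both summands, the ray `ℚ⁺r` is an extreme ray of the sum. -/
theorem directSum_external_ray_extreme {n : ℕ} (σ₁ σ₂ σ : Set (Fin n → ℚ))
    (h₁ : IsPolyCone σ₁) (h₂ : IsPolyCone σ₂)
    (hs₁ : StronglyConvex σ₁) (hs₂ : StronglyConvex σ₂)
    (r : Fin n → ℚ) (hds : IsDirectSumAlong σ₁ σ₂ σ r)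
    (hr₁ : IsExtremeRay σ₁ (rayOf r)) (hr₂ : IsExtremeRay σ₂ (rayOf r)) :
    IsExtremeRay σ (rayOf r) := by
  classical
  obtain ⟨⟨hrσ₁, hrσ₂⟩, hspan, hσeq⟩ := hds
  obtain ⟨c₁, hc₁pos, hc₁face, hdim⟩ := hr₁
  obtain ⟨c₂, hc₂pos, hc₂face, -⟩ := hr₂
  obtain ⟨B₁, hB₁⟩ := h₁
  obtain ⟨B₂, hB₂⟩ := h₂
  have hrray : r ∈ rayOf r := ⟨1, zero_le_one, (one_smul _ _).symm⟩
  have hdc₁r : dotQ c₁ r = 0 := by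
    have := hrray; rw [hc₁face] at this; exact this.2
  have hdc₂r : dotQ c₂ r = 0 := by
    have := hrray; rw [hc₂face] at this; exact this.2
  set V₁ := Submodule.span ℚ σ₁ with hV₁
  set V₂ := Submodule.span ℚ σ₂ with hV₂
  have hσ₁V : σ₁ ⊆ V₁ := Submodule.subset_span
  have hσ₂V : σ₂ ⊆ V₂ := Submodule.subset_span
  have hvanish : ∀ (c : Fin n → ℚ), dotQ c r = 0 → ∀ x ∈ V₁ ⊓ V₂, dotLin c x = 0 := by
    intro c hc x hx
    rw [hspan, Submodule.mem_span_singleton] at hx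
    obtain ⟨a, rfl⟩ := hx
    have : dotLin c r = 0 := hc
    rw [map_smul, this, smul_zero]
  obtain ⟨g₁, hg₁V, hg₁W⟩ := extend_vanish V₁ V₂ (dotLin c₁) (hvanish c₁ hdc₁r)
  obtain ⟨g₂, hg₂V, hg₂W⟩ := extend_vanish V₂ V₁ (dotLin c₂)
    (by intro x hx; exact hvanish c₂ hdc₂r x (by rwa [inf_comm] at hx))
  set φ : (Fin n → ℚ) →ₗ[ℚ] ℚ := g₁ + g₂ with hφ
  have hφ₁ : ∀ x ∈ σ₁, φ x = dotQ c₁ x := by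
    intro x hx
    have h1 : g₁ x = dotLin c₁ x := hg₁V x (hσ₁V hx)
    have h2 : g₂ x = 0 := hg₂W x (hσ₁V hx)
    simp [hφ, h1, h2, dotLin]; rfl
  have hφ₂ : ∀ x ∈ σ₂, φ x = dotQ c₂ x := by
    intro x hx
    have h1 : g₂ x = dotLin c₂ x := hg₂V x (hσ₂V hx)
    have h2 : g₁ x = 0 := hg₁W x (hσ₂V hx)
    simp [hφ, h1, h2, dotLin]; rfl
  have hφunion : ∀ x ∈ σ₁ ∪ σ₂, 0 ≤ φ x := by
    rintro x (hx | hx)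
    · rw [hφ₁ x hx]; exact hc₁pos x hx
    · rw [hφ₂ x hx]; exact hc₂pos x hx
  refine ⟨fun i => φ (Pi.single i 1), ?_, ?_, hdim⟩
  · intro x hx
    rw [dotQ_eq_lin]
    rw [hσeq] at hx
    obtain ⟨k, c, b, hc, hb, rfl⟩ := hx
    rw [map_sum]
    refine Finset.sum_nonneg fun i _ => ?_
    rw [map_smul, smul_eq_mul]
    exact mul_nonneg (hc i) (hφunion _ (hb i))
  · ext x
    simp only [Set.mem_setOf_eq, dotQ_eq_lin]
    constructor
    · rintro ⟨q, hq, rfl⟩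
      have hxσ : q • r ∈ σ := by
        rw [hσeq]
        exact posSpan_smul _ hq (posSpan_subset _ (Set.mem_union_left _ hrσ₁))
      refine ⟨hxσ, ?_⟩
      rw [map_smul, hφ₁ r hrσ₁, hdc₁r, smul_zero]
    · rintro ⟨hxσ, hx0⟩
      rw [hσeq] at hxσ
      obtain ⟨k, c, b, hc, hb, rfl⟩ := hxσ
      set y := ∑ i ∈ Finset.univ.filter (fun i => b i ∈ σ₁), c i • b i with hy
      set z := ∑ i ∈ Finset.univ.filter (fun i => ¬ b i ∈ σ₁), c i • b i with hz
      have hsplit : ∑ i, c i • b i = y + z :=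
        (Finset.sum_filter_add_sum_filter_not _ _ _).symm
      have hyσ₁ : y ∈ σ₁ := by
        rw [hB₁]
        refine Finset.sum_induction _ _ (fun a b => posSpan_add _) (posSpan_zero _) ?_
        intro i hi
        rw [Finset.mem_filter] at hi
        exact posSpan_smul _ (hc i) (by rw [← hB₁]; exact hi.2)
      have hzσ₂ : z ∈ σ₂ := by
        rw [hB₂]
        refine Finset.sum_induction _ _ (fun a b => posSpan_add _) (posSpan_zero _) ?_
        intro i hi
        rw [Finset.mem_filter] at hi
        have : b i ∈ σ₂ := (hb i).resolve_left hi.2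
        exact posSpan_smul _ (hc i) (by rw [← hB₂]; exact this)
      have hφy : φ y = dotQ c₁ y := hφ₁ y hyσ₁
      have hφz : φ z = dotQ c₂ z := hφ₂ z hzσ₂
      have hy0 : 0 ≤ dotQ c₁ y := hc₁pos y hyσ₁
      have hz0 : 0 ≤ dotQ c₂ z := hc₂pos z hzσ₂
      have hsum : dotQ c₁ y + dotQ c₂ z = 0 := by
        rw [hsplit] at hx0
        rw [← hφy, ← hφz, ← map_add, hx0]
      have hy' : y ∈ rayOf r := by
        rw [hc₁face]
        exact ⟨hyσ₁, by linarith⟩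
      have hz' : z ∈ rayOf r := by
        rw [hc₂face]
        exact ⟨hzσ₂, by linarith⟩
      obtain ⟨q₁, hq₁, hq₁e⟩ := hy'
      obtain ⟨q₂, hq₂, hq₂e⟩ := hz'
      exact ⟨q₁ + q₂, by linarith, by rw [hsplit, hq₁e, hq₂e, add_smul]⟩
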